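/- Let weights w_i ≥ 1 be assigned to vertices and Ã = (WA + AW)/2 with W = diag(w). Let V* be a maximal independent set such that for every i ∉ V* there exists a neighbor j ∈ V* with w_i ≥ w_j. Then x* with x*_i = w̄/w_i for i ∈ V* (where 1/w̄ = Σ_{i∈V*} 1/w_i) and x*_i = 0 otherwise is a Nash equilibrium of the weighted social distancing game, with equilibrium value λ* = w̄. -/

import Mathlib

open Matrix Finset

/-- Theorem 4.2: with additive weights Ã = (WA + AW)/2, the strategy with
x*_i = w̄/w_i on a maximal independent set V* (where 1/w̄ = Σ_{i∈V*} 1/w_i),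
provided every outside node has a neighbor in V* of no larger weight, is a
Nash equilibrium with value λ* = w̄. -/
theorem stmt_13 (n : ℕ) (A : Matrix (Fin n) (Fin n) ℝ)
    (hsym : A.IsSymm)
    (h01 : ∀ i j, A i j = 0 ∨ A i j = 1)
    (hdiag : ∀ i, A i i = 1)
    (w : Fin n → ℝ) (hw : ∀ i, 1 ≤ w i)
    (At : Matrix (Fin n) (Fin n) ℝ)
    (hAt : At = (2 : ℝ)⁻¹ •
      (Matrix.diagonal w * A + A * Matrix.diagonal w))
    (Vs : Finset (Fin n)) (hne : Vs.Nonempty)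
    (hindep : ∀ i ∈ Vs, ∀ j ∈ Vs, i ≠ j → A i j = 0)
    (hmax : ∀ i, i ∉ Vs → ∃ j ∈ Vs, A i j = 1 ∧ w j ≤ w i)
    (wbar : ℝ) (hwbar : wbar = (∑ i ∈ Vs, (w i)⁻¹)⁻¹)
    (xstar : Fin n → ℝ)
    (hxstar : xstar = fun i => if i ∈ Vs then wbar / w i else 0) :
    xstar ∈ stdSimplex ℝ (Fin n) ∧
    (∀ x ∈ stdSimplex ℝ (Fin n),
        xstar ⬝ᵥ At.mulVec xstar ≤ x ⬝ᵥ At.mulVec xstar) ∧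
    xstar ⬝ᵥ At.mulVec xstar = wbar := by

  have hwpos : ∀ i, 0 < w i := fun i => lt_of_lt_of_le one_pos (hw i)
  have hSpos : 0 < ∑ i ∈ Vs, (w i)⁻¹ :=
    Finset.sum_pos (fun i _ => inv_pos.2 (hwpos i)) hne
  have hwbarpos : 0 < wbar := by rw [hwbar]; exact inv_pos.2 hSpos
  have hxnn : ∀ i, 0 ≤ xstar i := by
    intro i; rw [hxstar]
    by_cases h : i ∈ Vs
    · simp only [if_pos h]; exact div_nonneg hwbarpos.le (hwpos i).le
    · simp [h]
  have hsumVs : ∑ i ∈ Vs, xstar i = 1 := by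
    rw [hxstar]
    have : ∑ i ∈ Vs, wbar / w i = wbar * ∑ i ∈ Vs, (w i)⁻¹ := by
      rw [Finset.mul_sum]; exact Finset.sum_congr rfl fun i _ => div_eq_mul_inv _ _
    calc ∑ i ∈ Vs, (if i ∈ Vs then wbar / w i else 0) = ∑ i ∈ Vs, wbar / w i :=
          Finset.sum_congr rfl fun i hi => by simp [hi]
      _ = wbar * ∑ i ∈ Vs, (w i)⁻¹ := this
      _ = 1 := by rw [hwbar, inv_mul_cancel₀ (ne_of_gt hSpos)]
  have hsum1 : ∑ i, xstar i = 1 := by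
    rw [← Finset.sum_subset (Finset.subset_univ Vs)]
    · exact hsumVs
    · intro j _ hj; rw [hxstar]; simp [hj]
  have hAt' : ∀ i j, At i j = A i j * (w i + w j) / 2 := by
    intro i j
    rw [hAt]
    simp [Matrix.smul_apply, Matrix.add_apply, Matrix.diagonal_mul, Matrix.mul_diagonal]
    ring
  have hy : ∀ i, At.mulVec xstar i = ∑ j ∈ Vs, A i j * (w i + w j) / 2 * (wbar / w j) := by
    intro i
    rw [Matrix.mulVec, dotProduct, ← Finset.sum_subset (Finset.subset_univ Vs)]
    · exact Finset.sum_congr rfl fun j hj => by rw [hAt' i j, hxstar]; simp [hj]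
    · intro j _ hj; rw [hxstar]; simp [hj]
  have hyVs : ∀ i ∈ Vs, At.mulVec xstar i = wbar := by
    intro i hi
    rw [hy i, Finset.sum_eq_single_of_mem i hi]
    · rw [hdiag i]
      have hwne : w i ≠ 0 := (hwpos i).ne'
      field_simp
      norm_num
    · intro j hj hne'
      rw [hindep i hi j hj (Ne.symm hne')]
      ring
  have hylb : ∀ i, wbar ≤ At.mulVec xstar i := by
    intro i
    by_cases hi : i ∈ Vs
    · rw [hyVs i hi]
    · obtain ⟨j, hj, hAij, hwj⟩ := hmax i hi
      rw [hy i]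
      have hterm : wbar ≤ A i j * (w i + w j) / 2 * (wbar / w j) := by
        rw [hAij, one_mul]
        rw [div_mul_div_comm, le_div_iff₀ (mul_pos two_pos (hwpos j))]
        nlinarith [hwpos j]
      refine le_trans hterm (Finset.single_le_sum (f := fun j => A i j * (w i + w j) / 2 * (wbar / w j)) ?_ hj)
      intro k hk
      show 0 ≤ A i k * (w i + w k) / 2 * (wbar / w k)
      have h0 : 0 ≤ A i k := by rcases h01 i k with h | h <;> rw [h] <;> norm_num
      apply mul_nonneg
      · exact div_nonneg (mul_nonneg h0 (by linarith [hwpos i, hwpos k])) (by norm_num)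
      · exact div_nonneg hwbarpos.le (hwpos k).le
  have hval : xstar ⬝ᵥ At.mulVec xstar = wbar := by
    rw [dotProduct, ← Finset.sum_subset (Finset.subset_univ Vs)]
    · calc ∑ i ∈ Vs, xstar i * At.mulVec xstar i = ∑ i ∈ Vs, xstar i * wbar :=
            Finset.sum_congr rfl fun i hi => by rw [hyVs i hi]
        _ = wbar := by rw [← Finset.sum_mul, hsumVs, one_mul]
    · intro j _ hj
      rw [hxstar]; simp [hj]
  refine ⟨⟨hxnn, hsum1⟩, ?_, hval⟩
  intro x hx
  rw [hval, dotProduct]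
  calc wbar = ∑ i, x i * wbar := by rw [← Finset.sum_mul, hx.2, one_mul]
    _ ≤ ∑ i, x i * At.mulVec xstar i :=
        Finset.sum_le_sum fun i _ => mul_le_mul_of_nonneg_left (hylb i) (hx.1 i)
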